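/- Define the channel Λ from 2×2 matrices to 4×4 matrices by Λ(X) = (4/3)·P(X ⊗ I₂/2)P, where P is the projector onto the symmetric subspace of ℂ²⊗ℂ². Let ρ be a 4×4 density matrix with two-qubit Bloch representation {x, y, T}, and apply Λ to each of its two qubits, obtaining the four-qubit state (Λ⊗Λ)(ρ) on qubits (a₁,a₂,b₁,b₂), where a₁,a₂ are the two clones of the first qubit and b₁,b₂ of the second. Then tracing out one clone on each side (qubits a₂ and b₂) yields (1/4)·(I₄ + (2/3)·Σᵢ xᵢ σᵢ⊗I₂ + (2/3)·Σᵢ yᵢ I₂⊗σᵢ + (4/9)·Σᵢⱼ tᵢⱼ σᵢ⊗σⱼ); i.e. the nonlocal output pairs ρ̃₁₄ = ρ̃₂₃ of the local Buzek–Hillery cloner have Bloch representation {(2/3)x, (2/3)y, (4/9)T}. -/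

import Mathlib

open Matrix Kronecker
open scoped ComplexOrder

/-- The three Pauli matrices. -/
noncomputable def pauli : Fin 3 → Matrix (Fin 2) (Fin 2) ℂ :=
  ![!![0, 1; 1, 0], !![0, -Complex.I; Complex.I, 0], !![1, 0; 0, -1]]

/-- The swap operator on `ℂᵈ ⊗ ℂᵈ`. -/
noncomputable def swapOp (d : Type*) [DecidableEq d] : Matrix (d × d) (d × d) ℂ :=
  Matrix.of fun p q => if p.1 = q.2 ∧ p.2 = q.1 then 1 else 0

/-- The projector `P = (I + S)/2` onto the symmetric subspace of `ℂᵈ ⊗ ℂᵈ`. -/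
noncomputable def symProj (d : Type*) [DecidableEq d] : Matrix (d × d) (d × d) ℂ :=
  (1/2 : ℂ) • (1 + swapOp d)

/-- The Buzek–Hillery cloning channel on one qubit: `Λ(X) = (4/3)·P(X ⊗ I₂/2)P`. -/
noncomputable def bhChannel (X : Matrix (Fin 2) (Fin 2) ℂ) :
    Matrix (Fin 2 × Fin 2) (Fin 2 × Fin 2) ℂ :=
  (4/3 : ℂ) • (symProj (Fin 2) * (X ⊗ₖ ((1/2 : ℂ) • (1 : Matrix (Fin 2) (Fin 2) ℂ)))
    * symProj (Fin 2))

/-- The tensor product channel `Λ ⊗ Λ` applied to a two-qubit state `ρ`, giving a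
four-qubit state on `(a₁, a₂, b₁, b₂)` where `(a₁, a₂)` are the clones of the first qubit
and `(b₁, b₂)` those of the second. -/
noncomputable def bhChannelTwo (ρ : Matrix (Fin 2 × Fin 2) (Fin 2 × Fin 2) ℂ) :
    Matrix ((Fin 2 × Fin 2) × (Fin 2 × Fin 2)) ((Fin 2 × Fin 2) × (Fin 2 × Fin 2)) ℂ :=
  Matrix.of fun p q => ∑ i : Fin 2, ∑ j : Fin 2, ∑ k : Fin 2, ∑ l : Fin 2,
    ρ (i, k) (j, l) * bhChannel (Matrix.single i j 1) p.1 q.1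
      * bhChannel (Matrix.single k l 1) p.2 q.2

set_option maxHeartbeats 2000000 in
lemma bh_ptr (i j a b : Fin 2) :
    ∑ c : Fin 2, bhChannel (Matrix.single i j 1) (a, c) (b, c)
    = (2/3 : ℂ) * (if i = a then 1 else 0) * (if j = b then 1 else 0)
      + (1/6 : ℂ) * (if i = j then 1 else 0) * (if a = b then 1 else 0) := by
  fin_cases i <;> fin_cases j <;> fin_cases a <;> fin_cases b <;>
  · simp only [bhChannel, symProj, Matrix.mul_apply, Fintype.sum_prod_type, Fin.sum_univ_two,
      Matrix.smul_apply, Matrix.add_apply, Matrix.one_apply, swapOp, Matrix.of_apply,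
      Matrix.kroneckerMap_apply, Matrix.single, smul_eq_mul]
    norm_num [Prod.ext_iff, Prod.fst_one, Prod.snd_one, Fin.ext_iff]

set_option maxHeartbeats 4000000 in
/-- Applying the Buzek–Hillery channel `Λ(X) = (4/3)·P(X ⊗ I₂/2)P` to each
qubit of a two-qubit state `ρ` with Bloch representation `{x, y, T}` and then tracing out
one clone on each side (qubits `a₂` and `b₂`) yields
`(1/4)(I₄ + (2/3)Σᵢ xᵢ σᵢ⊗I₂ + (2/3)Σᵢ yᵢ I₂⊗σᵢ + (4/9)Σᵢⱼ tᵢⱼ σᵢ⊗σⱼ)`, i.e. the nonlocal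
output pairs `ρ̃₁₄ = ρ̃₂₃` of the local Buzek–Hillery cloner have Bloch representation
`{(2/3)x, (2/3)y, (4/9)T}`. -/
theorem local_cloner_nonlocal_output (x y : Fin 3 → ℝ) (t : Fin 3 → Fin 3 → ℝ)
    (ρ : Matrix (Fin 2 × Fin 2) (Fin 2 × Fin 2) ℂ)
    (hρ : ρ = (1/4 : ℂ) • ((1 : Matrix (Fin 2 × Fin 2) (Fin 2 × Fin 2) ℂ)
        + ∑ i : Fin 3, (x i : ℂ) • (pauli i ⊗ₖ 1)
        + ∑ i : Fin 3, (y i : ℂ) • ((1 : Matrix (Fin 2) (Fin 2) ℂ) ⊗ₖ pauli i)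
        + ∑ i : Fin 3, ∑ j : Fin 3, (t i j : ℂ) • (pauli i ⊗ₖ pauli j)))
    (hpsd : ρ.PosSemidef) :
    (Matrix.of fun (a b : Fin 2 × Fin 2) => ∑ c : Fin 2, ∑ d : Fin 2,
        bhChannelTwo ρ ((a.1, c), (a.2, d)) ((b.1, c), (b.2, d)))
    = (1/4 : ℂ) • ((1 : Matrix (Fin 2 × Fin 2) (Fin 2 × Fin 2) ℂ)
        + (2/3 : ℂ) • ∑ i : Fin 3, (x i : ℂ) • (pauli i ⊗ₖ 1)
        + (2/3 : ℂ) • ∑ i : Fin 3, (y i : ℂ) • ((1 : Matrix (Fin 2) (Fin 2) ℂ) ⊗ₖ pauli i)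
        + (4/9 : ℂ) • ∑ i : Fin 3, ∑ j : Fin 3, (t i j : ℂ) • (pauli i ⊗ₖ pauli j)) := by
  
  ext ⟨a1, a2⟩ ⟨b1, b2⟩
  have key : (∑ c : Fin 2, ∑ d : Fin 2,
      bhChannelTwo ρ ((a1, c), (a2, d)) ((b1, c), (b2, d)))
      = ∑ i : Fin 2, ∑ j : Fin 2, ∑ k : Fin 2, ∑ l : Fin 2, ρ (i, k) (j, l)
        * (∑ c : Fin 2, bhChannel (Matrix.single i j 1) (a1, c) (b1, c))
        * (∑ d : Fin 2, bhChannel (Matrix.single k l 1) (a2, d) (b2, d)) := by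
    simp only [bhChannelTwo, Matrix.of_apply, Fin.sum_univ_two]
    ring
  simp only [Matrix.of_apply, key, bh_ptr]
  subst hρ
  fin_cases a1 <;> fin_cases a2 <;> fin_cases b1 <;> fin_cases b2 <;>
  · simp only [Fin.sum_univ_two, Fin.sum_univ_three, Matrix.smul_apply, Matrix.add_apply,
      Matrix.one_apply, Matrix.kroneckerMap_apply, pauli, Matrix.cons_val_zero,
      Matrix.cons_val_one, Matrix.head_cons, Matrix.cons_val', Matrix.empty_val',
      Matrix.cons_val_fin_one, Matrix.head_fin_const, smul_eq_mul, Prod.mk.injEq,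
      Fin.isValue, Matrix.of_apply, Matrix.cons_val_two, Matrix.tail_cons]
    norm_num [Prod.ext_iff, Prod.fst_one, Prod.snd_one, Fin.ext_iff]
    ring
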